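/- arXiv:1804.03298 — 3 statements merged into one kernel-verified Lean document; each statement's English description precedes it below -/
import Mathlib

section
/- Let n be a positive integer, let Ñ, X : Fin n → ℂ, let M̃, Y ∈ ℂ, let W be an n×n complex matrix, and let γ > 0. Define A := W * (X Ñᵀ), where X Ñᵀ is the n×n matrix with (i,j) entry Xᵢ·Ñⱼ, and D := (∑ i, Ñᵢ·Xᵢ) + M̃·Y. If D ≠ 0 and ‖D⁻¹ • A‖ < γ, then there exists a complex number f with |f| = 1 such that γ⁻¹·‖f • A‖ < Re(D · f). -/
noncomputable def l2OpNorm {n : ℕ} (A : Matrix (Fin n) (Fin n) ℂ) : ℝ :=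
  ‖Matrix.toEuclideanCLM (𝕜 := ℂ) A‖

set_option synthInstance.maxHeartbeats 1000000 in
lemma l2OpNorm_smul {n : ℕ} (c : ℂ) (A : Matrix (Fin n) (Fin n) ℂ) :
    l2OpNorm (c • A) = ‖c‖ * l2OpNorm A := by
  unfold l2OpNorm; rw [map_smul]; exact norm_smul c (Matrix.toEuclideanCLM (𝕜 := ℂ) A)

/-- (Pointwise content of Theorem 1, direction I ⇒ II.)
With `A = W * (X Ñᵀ)` and `D = ∑ i, Ñᵢ Xᵢ + M̃ Y`, if `D ≠ 0` and `‖D⁻¹ • A‖ < γ`,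
then there exists a unimodular `f` with `γ⁻¹ ‖f • A‖ < Re (D * f)`. -/
theorem convex_condition_of_hinf_bound {n : ℕ} (hn : 0 < n)
    (Ntil X : Fin n → ℂ) (Mtil Y : ℂ) (W : Matrix (Fin n) (Fin n) ℂ)
    (γ : ℝ) (hγ : 0 < γ)
    (A : Matrix (Fin n) (Fin n) ℂ) (hA : A = W * Matrix.vecMulVec X Ntil)
    (D : ℂ) (hD : D = (∑ i, Ntil i * X i) + Mtil * Y)
    (hD0 : D ≠ 0) (h : l2OpNorm (D⁻¹ • A) < γ) :
    ∃ f : ℂ, ‖f‖ = 1 ∧ γ⁻¹ * l2OpNorm (f • A) < (D * f).re := by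
  have hDa : ‖D‖ ≠ 0 := norm_ne_zero_iff.mpr hD0
  have hDn : (‖D‖ : ℝ) ≠ 0 := norm_ne_zero_iff.mpr hD0
  refine ⟨(starRingEnd ℂ) D / ‖D‖, ?_, ?_⟩
  · simp [norm_div, div_self hDa]
  · have hDf : D * ((starRingEnd ℂ) D / ‖D‖) = (‖D‖ : ℂ) := by
      rw [mul_div_assoc', Complex.mul_conj']
      push_cast
      rw [sq, mul_div_assoc, div_self (by exact_mod_cast hDn), mul_one]
    rw [hDf]
    have habs : ‖(starRingEnd ℂ) D / (‖D‖ : ℂ)‖ = 1 := by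
      simp [norm_div, div_self hDn, div_self hDa]
    rw [l2OpNorm_smul, habs, one_mul]
    rw [l2OpNorm_smul] at h
    have hDnorm : (0:ℝ) < ‖D‖ := norm_pos_iff.mpr hD0
    simp only [norm_inv] at h
    have h2 : l2OpNorm A < γ * ‖D‖ := mul_comm γ ‖D‖ ▸ (inv_mul_lt_iff₀ hDnorm).mp h
    simp only [Complex.ofReal_re]
    calc γ⁻¹ * l2OpNorm A < γ⁻¹ * (γ * ‖D‖) := by
          exact mul_lt_mul_of_pos_left h2 (inv_pos.mpr hγ)
      _ = ‖D‖ := by field_simp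
end

section
/- Let Γ ∈ ℝ and a, p, p₀ ∈ ℂ. Define d := 2·Re(conj(p₀)·p) − |p₀|². If d > 0 and Γ·d > |a|², then p ≠ 0 and |a|²/|p|² < Γ (equivalently |a·p⁻¹|² < Γ). -/
/-- (Scalar single-frequency mechanism of Theorem 2.)
With `d = 2 Re (conj p₀ * p) - |p₀|²`, if `d > 0` and `Γ d > |a|²` then `p ≠ 0`
and `|a|² / |p|² < Γ`. -/
theorem gamma_bounds_squared_gain (Γ : ℝ) (a p p₀ : ℂ)
    (d : ℝ) (hd : d = 2 * ((starRingEnd ℂ) p₀ * p).re - ‖p₀‖ ^ 2)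
    (hdpos : 0 < d) (h : ‖a‖ ^ 2 < Γ * d) :
    p ≠ 0 ∧ ‖a‖ ^ 2 / ‖p‖ ^ 2 < Γ := by
  have key : d ≤ ‖p‖ ^ 2 := by
    have h0 : (0:ℝ) ≤ ‖p - p₀‖ ^ 2 := sq_nonneg _
    have hexp : ‖p - p₀‖ ^ 2 =
        ‖p‖ ^ 2 - 2 * ((starRingEnd ℂ) p₀ * p).re + ‖p₀‖ ^ 2 := by
      have := Complex.sq_norm (p - p₀)
      rw [Complex.normSq_sub] at this
      rw [this, Complex.sq_norm, Complex.sq_norm, mul_comm p ((starRingEnd ℂ) p₀)]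
      ring
    nlinarith [hexp, h0]
  have hppos : 0 < ‖p‖ ^ 2 := lt_of_lt_of_le hdpos key
  have hpne : p ≠ 0 := by
    intro hp
    simp [hp] at hppos
  refine ⟨hpne, ?_⟩
  have hΓ : 0 < Γ := by nlinarith [sq_nonneg ‖a‖]
  rw [div_lt_iff₀ hppos]
  nlinarith
end

section
/- Let n ≥ 1, let Γ be an n×n Hermitian complex matrix, let v ∈ ℂⁿ be a (column) vector, and let p, p₀ ∈ ℂ. Define d := 2·Re(conj(p₀)·p) − |p₀|², a real number. Suppose the (n+1)×(n+1) Hermitian block matrix [[Γ, v],[vᴴ, d]] (with Γ in the top-left block, v the last column, vᴴ the last row, and d the bottom-right scalar) is positive definite. Then p ≠ 0 and the matrix Γ − |p|⁻² • (v·vᴴ) is positive definite, where v·vᴴ is the n×n rank-one matrix with (i,j) entry vᵢ·conj(vⱼ). -/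
open Matrix
open scoped ComplexOrder

/-- (Matrix form of the LMIs (40)–(41) of Theorem 2 at one
frequency point.) If the Hermitian block matrix `[[Γ, v], [vᴴ, d]]` with
`d = 2 Re (conj p₀ * p) - |p₀|²` is positive definite, then `p ≠ 0` and
`Γ - |p|⁻² • (v vᴴ)` is positive definite. -/
theorem schur_block_lmi_implies_rank_one_bound {n : ℕ} (hn : 1 ≤ n)
    (Γ : Matrix (Fin n) (Fin n) ℂ) (hΓ : Γ.IsHermitian)
    (v : Fin n → ℂ) (p p₀ : ℂ)
    (d : ℝ) (hd : d = 2 * ((starRingEnd ℂ) p₀ * p).re - ‖p₀‖ ^ 2)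
    (hpd : (Matrix.fromBlocks Γ
        (Matrix.of fun i (_ : Unit) => v i)
        (Matrix.of fun (_ : Unit) j => (starRingEnd ℂ) (v j))
        (Matrix.of fun (_ : Unit) (_ : Unit) => (d : ℂ))).PosDef) :
    p ≠ 0 ∧
      (Γ - (‖p‖ ^ 2)⁻¹ • Matrix.vecMulVec v (star v)).PosDef := by
  -- d is positive
  have hd0 : 0 < d := by
    have hy : (Sum.elim (0 : Fin n → ℂ) (fun _ : Unit => 1)) ≠ 0 := by
      intro h
      have := congrFun h (Sum.inr ())
      simp at this
    have h := hpd.dotProduct_mulVec_pos hy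
    rw [Matrix.fromBlocks_mulVec] at h
    simp only [Sum.elim_comp_inl, Sum.elim_comp_inr] at h
    have hstar : star (Sum.elim (0 : Fin n → ℂ) (fun _ : Unit => 1))
        = Sum.elim (0 : Fin n → ℂ) (fun _ : Unit => 1) := by
      funext i; cases i <;> simp [Pi.star_apply]
    rw [hstar, sumElim_dotProduct_sumElim] at h
    simp [dotProduct, Matrix.mulVec] at h
    exact_mod_cast h
  -- d ≤ |p|²
  have hdle : d ≤ ‖p‖ ^ 2 := by
    rw [hd]
    simp only [Complex.sq_norm, Complex.normSq_apply, Complex.mul_re,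
      Complex.conj_re, Complex.conj_im]
    nlinarith [sq_nonneg (p.re - p₀.re), sq_nonneg (p.im - p₀.im)]
  have hp2 : (0:ℝ) < ‖p‖ ^ 2 := lt_of_lt_of_le hd0 hdle
  have hp : p ≠ 0 := by
    intro h
    rw [h] at hp2
    simp at hp2
  refine ⟨hp, Matrix.PosDef.of_dotProduct_mulVec_pos ?_ ?_⟩
  · -- Hermitian
    have hW : ((‖p‖ ^ 2)⁻¹ • Matrix.vecMulVec v (star v)).IsHermitian := by
      unfold Matrix.IsHermitian
      ext i j
      simp [Matrix.vecMulVec, Matrix.conjTranspose_apply, mul_comm]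
    exact hΓ.sub hW
  · intro x hx
    set s : ℂ := dotProduct (star v) x with hs
    set t : ℂ := -s / (d : ℂ) with ht
    have hdne : (d : ℂ) ≠ 0 := by exact_mod_cast hd0.ne'
    -- apply positive definiteness to the vector (x, t)
    have hy : (Sum.elim x (fun _ : Unit => t)) ≠ 0 := by
      intro h
      apply hx
      funext i
      have := congrFun h (Sum.inl i)
      simpa using this
    have hF := hpd.dotProduct_mulVec_pos hy
    rw [Matrix.fromBlocks_mulVec] at hF
    simp only [Sum.elim_comp_inl, Sum.elim_comp_inr] at hF
    have hstar : star (Sum.elim x (fun _ : Unit => t))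
        = Sum.elim (star x) (fun _ : Unit => star t) := by
      funext i; cases i <;> simp [Pi.star_apply]
    rw [hstar, sumElim_dotProduct_sumElim] at hF
    set Q : ℂ := dotProduct (star x) (Γ.mulVec x) with hQ
    have h1 : dotProduct (star x)
        ((Matrix.of fun i (_ : Unit) => v i).mulVec (fun _ : Unit => t)) =
        t * star s := by
      simp only [Matrix.mulVec, dotProduct, Matrix.of_apply, star_sum, Finset.mul_sum,
        Fintype.sum_unique, Pi.star_apply, star_mul', star_star, hs]
      apply Finset.sum_congr rfl
      intro i _
      ring
    have h2 : dotProduct (fun _ : Unit => star t)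
        ((Matrix.of fun (_ : Unit) j => (starRingEnd ℂ) (v j)).mulVec x
          + (Matrix.of fun (_ : Unit) (_ : Unit) => (d : ℂ)).mulVec (fun _ : Unit => t)) =
        star t * s + star t * ((d : ℂ) * t) := by
      simp [Matrix.mulVec, dotProduct, hs, mul_add]
    rw [dotProduct_add, h1, h2] at hF
    -- hF : 0 < Q + t * star s + (star t * s + star t * (d * t))
    have habs : star s * s = ((‖s‖ ^ 2 : ℝ) : ℂ) := by
      rw [Complex.sq_norm]
      simp [Complex.normSq_eq_conj_mul_self]
    have hts : t * star s + (star t * s + star t * ((d : ℂ) * t))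
        = -(((‖s‖ ^ 2 / d : ℝ) : ℂ)) := by
      have habs' : s * (starRingEnd ℂ) s = ((‖s‖ : ℂ)) ^ 2 := by
        rw [mul_comm, ← Complex.star_def]
        exact_mod_cast habs
      rw [ht]
      push_cast
      field_simp
      rw [Complex.star_def]
      linear_combination (-1 : ℂ) * habs'
    -- compute the target quadratic form
    have hWx : dotProduct (star x) ((Matrix.vecMulVec v (star v)).mulVec x)
        = star s * s := by
      simp only [Matrix.mulVec, dotProduct, Matrix.vecMulVec_apply, star_sum,
        Pi.star_apply, star_mul', star_star, Finset.mul_sum, Finset.sum_mul, hs]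
      rw [Finset.sum_comm]
      apply Finset.sum_congr rfl
      intro j _
      apply Finset.sum_congr rfl
      intro i _
      ring
    have key : dotProduct (star x)
        ((Γ - (‖p‖ ^ 2)⁻¹ • Matrix.vecMulVec v (star v)).mulVec x)
        = (Q + (t * star s + (star t * s + star t * ((d : ℂ) * t))))
          + ((‖s‖ ^ 2 / d - (‖p‖ ^ 2)⁻¹ * ‖s‖ ^ 2 : ℝ) : ℂ) := by
      rw [Matrix.sub_mulVec, dotProduct_sub, Matrix.smul_mulVec,
        dotProduct_smul, hWx, habs, hts, ← hQ]
      push_cast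
      simp [Complex.real_smul]
      ring
    rw [key]
    refine add_pos_of_pos_of_nonneg ?_ ?_
    · convert hF using 1
      ring
    · rw [Complex.zero_le_real]
      have h1 : (‖p‖ ^ 2)⁻¹ * ‖s‖ ^ 2 ≤ ‖s‖ ^ 2 / d := by
        rw [div_eq_inv_mul]
        apply mul_le_mul_of_nonneg_right _ (sq_nonneg _)
        exact inv_anti₀ hd0 hdle
      linarith
end
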